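/- Let d ≥ 2 be an integer, m > 1 a real number, s := m^d − (m−1)^d, and a := (m−1)/m. Define x : Fin d → ℝ by x 0 = m^{d−1}/s and x k = m^{k−1}(m−1)^{d−k}/s for 1 ≤ k ≤ d−1. Then the multiset of cyclic differences { x(k+1 mod d) − x k : k ∈ Fin d } equals the multiset consisting of the single value y₀ = −(1 − a^{d−1})/(m(1 − a^d)) together with the d−1 values y_k = a^{k−1}/(m²(1 − a^d)) for k = 1, …, d−1. -/

import Mathlib

lemma range_succ_map : ∀ n : ℕ, Multiset.range (n + 1) = 0 ::ₘ Multiset.map Nat.succ (Multiset.range n) := by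
  intro n
  have : Multiset.range (n+1) = ((List.range (n+1) : List ℕ) : Multiset ℕ) := rfl
  rw [this, List.range_succ_eq_map, ← Multiset.cons_coe, ← Multiset.map_coe]
  rfl

lemma reflect_map (g : ℕ → ℝ) : ∀ n, Multiset.map (fun k => g (n - 1 - k)) (Multiset.range n)
    = Multiset.map g (Multiset.range n) := by
  intro n
  induction n generalizing g with
  | zero => simp
  | succ n ih =>
    conv_lhs => rw [range_succ_map]
    rw [Multiset.range_succ, Multiset.map_cons, Multiset.map_cons, Multiset.map_map]
    congr 1
    calc Multiset.map ((fun k => g (n + 1 - 1 - k)) ∘ Nat.succ) (Multiset.range n)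
        = Multiset.map (fun k => g (n - 1 - k)) (Multiset.range n) := by
          apply Multiset.map_congr rfl
          intro k _
          simp only [Function.comp]
          congr 1
          omega
      _ = Multiset.map g (Multiset.range n) := ih g

lemma univ_map_eq_range_map {n : ℕ} (f : Fin n → ℝ) (g : ℕ → ℝ) (h : ∀ k : Fin n, f k = g k.val) :
    Multiset.map f Finset.univ.val = Multiset.map g (Multiset.range n) := by
  rw [Fin.univ_val_map, List.ofFn_eq_map]
  have : Multiset.range n = ((List.finRange n).map Fin.val : List ℕ) := by
    rw [List.map_coe_finRange_eq_range]; rfl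
  rw [this]
  simp only [← Multiset.map_coe, Multiset.map_map]
  exact Multiset.map_congr rfl (fun k _ => h k)

theorem cyclic_differences_multiset (d : ℕ) (hd : 2 ≤ d) (m : ℝ) (hm : 1 < m)
    (s a : ℝ) (hs : s = m ^ d - (m - 1) ^ d) (ha : a = (m - 1) / m)
    (x : Fin d → ℝ)
    (hx0 : x ⟨0, by omega⟩ = m ^ (d - 1) / s)
    (hxk : ∀ k : Fin d, 1 ≤ (k : ℕ) →
      x k = m ^ ((k : ℕ) - 1) * (m - 1) ^ (d - (k : ℕ)) / s) :
    Multiset.map (fun k : Fin d =>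
        x ⟨((k : ℕ) + 1) % d, Nat.mod_lt _ (by omega)⟩ - x k) Finset.univ.val =
      (-(1 - a ^ (d - 1)) / (m * (1 - a ^ d))) ::ₘ
        Multiset.map (fun k : ℕ => a ^ k / (m ^ 2 * (1 - a ^ d)))
          (Finset.range (d - 1)).val := by
  obtain ⟨e, rfl⟩ : ∃ e, d = e + 2 := ⟨d - 2, by omega⟩
  have hm0 : (0:ℝ) < m := lt_trans one_pos hm
  have hmm : (0:ℝ) < m - 1 := sub_pos.mpr hm
  have hmne : m ≠ 0 := ne_of_gt hm0
  have hs0 : 0 < s := by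
    rw [hs]; exact sub_pos.mpr (pow_lt_pow_left₀ (by linarith) (le_of_lt hmm) (by omega))
  have hsne : s ≠ 0 := ne_of_gt hs0
  have hA : 1 - a ^ (e + 2) = s / m ^ (e + 2) := by
    rw [ha, div_pow, hs]
    field_simp
  have hAne : 1 - a ^ (e + 2) ≠ 0 := by
    rw [hA]
    positivity
  -- the explicit ℕ-indexed value function
  set g : ℕ → ℝ := fun j => if j = 0 then ((m-1)^(e+1) - m^(e+1))/s
      else m^(j-1) * (m-1)^(e+1-j)/s with hg
  have step1 : Multiset.map (fun k : Fin (e+2) =>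
        x ⟨((k : ℕ) + 1) % (e+2), Nat.mod_lt _ (by omega)⟩ - x k) Finset.univ.val
      = Multiset.map g (Multiset.range (e+2)) := by
    apply univ_map_eq_range_map
    rintro ⟨kv, hkv⟩
    simp only
    rcases Nat.eq_zero_or_pos kv with h0 | h1
    · subst h0
      have hmod : (0 + 1) % (e + 2) = 1 := Nat.mod_eq_of_lt (by omega)
      simp only [hmod]
      rw [hxk ⟨1, by omega⟩ (by norm_num), hx0]
      simp only [hg, if_pos rfl, show e + 2 - 1 = e + 1 from by omega, pow_zero]
      ring
    · rcases Nat.lt_or_ge kv (e+1) with h2 | h2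
      · -- 1 ≤ kv ≤ e
        obtain ⟨k', rfl⟩ : ∃ k', kv = k' + 1 := ⟨kv - 1, by omega⟩
        have hmod : (k' + 1 + 1) % (e + 2) = k' + 2 := Nat.mod_eq_of_lt (by omega)
        simp only [hmod]
        rw [hxk ⟨k' + 2, by omega⟩ (by simp), hxk ⟨k' + 1, hkv⟩ (by simp)]
        simp only [hg, if_neg (Nat.succ_ne_zero k')]
        obtain ⟨t, rfl⟩ : ∃ t, e = k' + t := ⟨e - k', by omega⟩
        simp only [Nat.add_sub_cancel]
        rw [show k' + 2 - 1 = k' + 1 by omega, show k' + t + 2 - (k' + 2) = t by omega,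
          show k' + t + 2 - (k' + 1) = t + 1 by omega, show k' + t + 1 - (k' + 1) = t by omega]
        field_simp
        ring
      · -- kv = e + 1
        have hkv' : kv = e + 1 := by omega
        subst hkv'
        have hmod : (e + 1 + 1) % (e + 2) = 0 := by simp
        simp only [hmod]
        rw [hxk ⟨e + 1, hkv⟩ (by simp), hx0]
        simp only [hg, if_neg (Nat.succ_ne_zero e), show e + 2 - 1 = e + 1 from by omega]
        rw [show e + 1 - 1 = e by omega, show e + 2 - (e + 1) = 1 by omega,
          show e + 1 - (e + 1) = 0 by omega]
        field_simp
        ring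
  rw [step1, range_succ_map, Multiset.map_cons, Multiset.map_map]
  simp only [show e + 2 - 1 = e + 1 from by omega, Finset.range_val]
  congr 1
  · -- head
    simp only [hg, if_pos rfl]
    rw [hA, ha, div_pow]
    field_simp
    ring
  · -- tail
    rw [← reflect_map (fun k : ℕ => a ^ k / (m ^ 2 * (1 - a ^ (e+2)))) (e+1)]
    apply Multiset.map_congr rfl
    intro k hk
    have hk' : k ≤ e := by
      have := Multiset.mem_range.mp hk; omega
    obtain ⟨t, rfl⟩ : ∃ t, e = k + t := ⟨e - k, by omega⟩
    simp only [Function.comp, hg, if_neg (Nat.succ_ne_zero k)]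
    rw [show Nat.succ k - 1 = k by omega, show k + t + 1 - Nat.succ k = t by omega,
      show k + t + 1 - 1 - k = t by omega]
    rw [hA, ha, div_pow]
    field_simp
    ring
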